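/- Let f : ℝⁿ → ℝⁿ be locally Lipschitz, let h : ℝⁿ → ℝ be continuously differentiable, and let α : ℝ → ℝ be a locally Lipschitz extended class K function such that L_f h (x) ≥ -α(h(x)) for every x ∈ ℝⁿ with h(x) ≥ 0. Then for every t₀ < t_f and every differentiable curve x : ℝ → ℝⁿ satisfying x'(t) = f(x(t)) for all t ∈ [t₀, t_f), if h(x(t₀)) > 0 then h(x(t)) > 0 for all t ∈ [t₀, t_f); that is, the set Int(C) = {x : h(x) > 0} is forward invariant. -/

import Mathlib

open Set

/-- Corollary (first-order CBF set invariance): if the Lie derivative of `h` along `f`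
satisfies `L_f h (x) ≥ -α (h x)` on `C = {x : h x ≥ 0}` for a locally Lipschitz extended
class K function `α`, then the set `Int(C) = {x : h x > 0}` is forward invariant along
the flow of `ẋ = f(x)`. -/
theorem int_superlevel_forward_invariant {n : ℕ}
    (f : EuclideanSpace ℝ (Fin n) → EuclideanSpace ℝ (Fin n)) (hf : LocallyLipschitz f)
    (h : EuclideanSpace ℝ (Fin n) → ℝ) (hh : ContDiff ℝ 1 h)
    (α : ℝ → ℝ) (hα_lip : LocallyLipschitz α) (hα_mono : StrictMono α) (hα_zero : α 0 = 0)
    (hbar : ∀ x : EuclideanSpace ℝ (Fin n), 0 ≤ h x → fderiv ℝ h x (f x) ≥ -α (h x)) :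
    ∀ t₀ t_f : ℝ, t₀ < t_f → ∀ x : ℝ → EuclideanSpace ℝ (Fin n),
      (∀ t ∈ Set.Ico t₀ t_f, HasDerivAt x (f (x t)) t) →
      0 < h (x t₀) →
      ∀ t ∈ Set.Ico t₀ t_f, 0 < h (x t) := by
  intro t₀ t_f htf x hx hx0
  set y : ℝ → ℝ := fun t => h (x t) with hy
  have hyd : ∀ t ∈ Set.Ico t₀ t_f, HasDerivAt y (fderiv ℝ h (x t) (f (x t))) t := by
    intro t ht
    have hdh : HasFDerivAt h (fderiv ℝ h (x t)) (x t) :=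
      ((hh.differentiable one_ne_zero) (x t)).hasFDerivAt
    exact hdh.comp_hasDerivAt t (hx t ht)
  by_contra hcon
  push_neg at hcon
  obtain ⟨t₁, ht₁, hyt₁⟩ := hcon
  -- first hitting time
  set S : Set ℝ := {t ∈ Icc t₀ t₁ | y t ≤ 0} with hSdef
  have hSsub : S ⊆ Icc t₀ t₁ := fun t ht => ht.1
  have hSne : S.Nonempty := ⟨t₁, ⟨⟨ht₁.1, le_refl t₁⟩, hyt₁⟩⟩
  have hSbdd : BddBelow S := ⟨t₀, fun t ht => ht.1.1⟩
  set s : ℝ := sInf S with hsdef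
  have hs_cl : s ∈ closure S := csInf_mem_closure hSne hSbdd
  have hs_mem : s ∈ Icc t₀ t₁ := closure_minimal hSsub isClosed_Icc hs_cl
  have hs_Ico : s ∈ Ico t₀ t_f := ⟨hs_mem.1, lt_of_le_of_lt hs_mem.2 ht₁.2⟩
  have hycont : ∀ t ∈ Ico t₀ t_f, ContinuousAt y t := fun t ht => (hyd t ht).continuousAt
  have hys_le : y s ≤ 0 := by
    have hne : (nhdsWithin s S).NeBot := mem_closure_iff_nhdsWithin_neBot.mp hs_cl
    exact le_of_tendsto ((hycont s hs_Ico).continuousWithinAt.tendsto)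
      (eventually_nhdsWithin_of_forall (fun t (ht : t ∈ S) => ht.2))
  have hts : t₀ < s := by
    rcases lt_or_eq_of_le hs_mem.1 with h' | h'
    · exact h'
    · exact absurd hys_le (by rw [← h']; simpa using not_le.mpr hx0)
  have hpos : ∀ t ∈ Ico t₀ s, 0 < y t := by
    intro t ht
    by_contra hle
    push_neg at hle
    have : t ∈ S := ⟨⟨ht.1, le_trans ht.2.le hs_mem.2⟩, hle⟩
    exact absurd (csInf_le hSbdd this) (not_le.mpr ht.2)
  -- local Lipschitz bound for α near 0
  obtain ⟨K, U, hU, hlip⟩ := hα_lip 0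
  obtain ⟨ε, hε, hball⟩ := Metric.mem_nhds_iff.mp hU
  have hKey : ∀ a : ℝ, 0 ≤ a → a ≤ ε / 2 → α a ≤ (K : ℝ) * a := by
    intro a ha0 haε
    have h0U : (0 : ℝ) ∈ U := hball (Metric.mem_ball_self hε)
    have haU : a ∈ U := hball (by
      rw [Metric.mem_ball, Real.dist_eq, sub_zero, abs_of_nonneg ha0]; linarith)
    have := hlip.dist_le_mul a haU 0 h0U
    rw [Real.dist_eq, Real.dist_eq, hα_zero, sub_zero, sub_zero, abs_of_nonneg ha0] at this
    calc α a ≤ |α a| := le_abs_self _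
      _ ≤ (K : ℝ) * a := this
  -- choose τ close to s where y stays below ε/2
  have hev : ∀ᶠ t in nhds s, y t < ε / 2 :=
    (hycont s hs_Ico).eventually_lt continuousAt_const (by linarith)
  obtain ⟨δ, hδ, hδball⟩ := Metric.eventually_nhds_iff.mp hev
  set τ : ℝ := max t₀ (s - δ / 2) with hτdef
  have hτs : τ < s := max_lt hts (by linarith)
  have hτ0 : t₀ ≤ τ := le_max_left _ _
  have hsmall : ∀ t ∈ Icc τ s, y t < ε / 2 := by
    intro t ht
    apply hδball
    rw [Real.dist_eq, abs_of_nonpos (by linarith [ht.2])]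
    have : s - δ / 2 ≤ τ := le_max_right _ _
    linarith [ht.1]
  have htIco : ∀ t ∈ Icc τ s, t ∈ Ico t₀ t_f := fun t ht =>
    ⟨le_trans hτ0 ht.1, lt_of_le_of_lt ht.2 hs_Ico.2⟩
  -- g(t) = y(t) * exp(K t) is monotone on [τ, s]
  set g : ℝ → ℝ := fun t => y t * Real.exp ((K : ℝ) * t) with hgdef
  have hgderiv : ∀ t ∈ Ioo τ s, HasDerivAt g
      (fderiv ℝ h (x t) (f (x t)) * Real.exp ((K : ℝ) * t)
        + y t * (Real.exp ((K : ℝ) * t) * (K : ℝ))) t := by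
    intro t ht
    have h1 := hyd t (htIco t ⟨ht.1.le, ht.2.le⟩)
    have h2 : HasDerivAt (fun u => Real.exp ((K : ℝ) * u))
        (Real.exp ((K : ℝ) * t) * (K : ℝ)) t :=
      ((hasDerivAt_id t).const_mul (K : ℝ)).exp.congr_deriv (by simp)
    exact h1.mul h2
  have hmono : MonotoneOn g (Icc τ s) := by
    apply monotoneOn_of_deriv_nonneg (convex_Icc τ s)
    · intro t ht
      exact (((hycont t (htIco t ht)).mul (by fun_prop))).continuousWithinAt
    · intro t ht
      rw [interior_Icc] at ht
      exact ((hgderiv t ht).differentiableAt).differentiableWithinAt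
    · intro t ht
      rw [interior_Icc] at ht
      rw [(hgderiv t ht).deriv]
      have hy_pos : 0 < y t := hpos t ⟨le_trans hτ0 ht.1.le, ht.2⟩
      have hy_small : y t < ε / 2 := hsmall t ⟨ht.1.le, ht.2.le⟩
      have hb := hbar (x t) hy_pos.le
      have hk := hKey (y t) hy_pos.le hy_small.le
      have hexp : 0 < Real.exp ((K : ℝ) * t) := Real.exp_pos _
      have : fderiv ℝ h (x t) (f (x t)) + (K : ℝ) * y t ≥ 0 := by
        have : -α (y t) + (K : ℝ) * y t ≥ 0 := by linarith
        linarith [hb]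
      nlinarith
  have hle := hmono (left_mem_Icc.mpr hτs.le) (right_mem_Icc.mpr hτs.le) hτs.le
  have hgτ : 0 < g τ :=
    mul_pos (hpos τ ⟨hτ0, hτs⟩) (Real.exp_pos _)
  have hgs : g s ≤ 0 := mul_nonpos_of_nonpos_of_nonneg hys_le (Real.exp_pos _).le
  linarith
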